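/- The measure ν on I = [0,1] ∪ {∞} defined by ν((t,1] ∪ {∞}) = min(1, 1/(2t)) for t ∈ (0,1] (and ν(I)=1) solves the recursive distributional equation X ≐ γ[τ](X₁,X₂), where τ is uniform on [0,1], X₁,X₂ are independent copies of X independent of τ, and γ[t](x,y) = x∧y if x∧y > t, and = ∞ otherwise. -/

import Mathlib

open MeasureTheory Set
open scoped ENNReal

/-- The map γ[t](x,y) on I = [0,1] ∪ {∞}, encoded in ℝ≥0∞:
γ[t](x,y) = min x y if min x y > t, else ∞. -/
noncomputable def gammaMap (t : ℝ) (x y : ℝ≥0∞) : ℝ≥0∞ :=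
  if ENNReal.ofReal t < min x y then min x y else ⊤

lemma measurable_gammaMap :
    Measurable (fun p : ℝ × ℝ≥0∞ × ℝ≥0∞ => gammaMap p.1 p.2.1 p.2.2) := by
  unfold gammaMap
  exact Measurable.ite
    (measurableSet_lt (ENNReal.measurable_ofReal.comp measurable_fst)
      ((measurable_fst.comp measurable_snd).min (measurable_snd.comp measurable_snd)))
    ((measurable_fst.comp measurable_snd).min (measurable_snd.comp measurable_snd))
    measurable_const

lemma slice_set_eq (a : ℝ≥0∞) (ha : a ≠ ⊤) (t : ℝ) :
    {p : ℝ≥0∞ × ℝ≥0∞ | gammaMap t p.1 p.2 ≤ a}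
      = (Ioi (ENNReal.ofReal t) ×ˢ Ioi (ENNReal.ofReal t))
        \ (Ioi (max (ENNReal.ofReal t) a) ×ˢ Ioi (max (ENNReal.ofReal t) a)) := by
  ext p
  simp only [mem_setOf_eq, mem_diff, mem_prod, mem_Ioi, gammaMap, max_lt_iff]
  split_ifs with h
  · rw [lt_min_iff] at h
    rw [← not_lt (a := a), lt_min_iff]
    tauto
  · rw [lt_min_iff] at h
    simp only [top_le_iff, ha, false_iff]
    exact fun hmem => h hmem.1

lemma slice_measure (ν : Measure ℝ≥0∞) [IsProbabilityMeasure ν]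
    (a : ℝ≥0∞) (ha : a ≠ ⊤) (t : ℝ) :
    (ν.prod ν) {p : ℝ≥0∞ × ℝ≥0∞ | gammaMap t p.1 p.2 ≤ a}
      = ν (Ioi (ENNReal.ofReal t)) ^ 2 - ν (Ioi (max (ENNReal.ofReal t) a)) ^ 2 := by
  rw [slice_set_eq a ha t,
    measure_diff (Set.prod_mono (Ioi_subset_Ioi (le_max_left _ _))
        (Ioi_subset_Ioi (le_max_left _ _)))
      ((measurableSet_Ioi.prod measurableSet_Ioi).nullMeasurableSet)
      (measure_ne_top _ _),
    Measure.prod_prod, Measure.prod_prod, sq, sq]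

lemma real_int (α : ℝ) (h1 : 1/2 < α) (h2 : α ≤ 1) :
    ∫ t in Ioc (1/2 : ℝ) α, ((1/(2*t))^2 - (1/(2*α))^2)
      = (2*α - 1)^2/(8*α^2) := by
  have hα0 : 0 < α := by linarith
  rw [← intervalIntegral.integral_of_le h1.le]
  have hD : ∀ x ∈ Set.uIcc (1/2 : ℝ) α, HasDerivAt
      (fun t : ℝ => -(1/4) * t⁻¹ - (1/(2*α))^2 * t) ((1/(2*x))^2 - (1/(2*α))^2) x := by
    intro x hx
    rw [uIcc_of_le h1.le] at hx
    have hx0 : x ≠ 0 := by have := hx.1; intro h; rw [h] at this; linarith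
    have := ((hasDerivAt_inv hx0).const_mul (-(1/4) : ℝ)).sub
      ((hasDerivAt_id x).const_mul ((1/(2*α))^2))
    refine this.congr_deriv ?_
    ring
  have hI : IntervalIntegrable (fun t : ℝ => (1/(2*t))^2 - (1/(2*α))^2)
      volume (1/2) α := by
    apply ContinuousOn.intervalIntegrable
    rw [uIcc_of_le h1.le]
    apply ContinuousOn.sub _ continuousOn_const
    apply ContinuousOn.pow
    exact continuousOn_const.div (continuousOn_const.mul continuousOn_id)
      (fun x hx => by have := hx.1; positivity)
  rw [intervalIntegral.integral_eq_sub_of_hasDerivAt hD hI]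
  field_simp
  ring

lemma measure_union_null' {α : Type*} {m : MeasurableSpace α} {μ : Measure α}
    {s t : Set α} (ht : μ t = 0) : μ (s ∪ t) = μ s :=
  le_antisymm ((measure_union_le s t).trans (by simp [ht])) (measure_mono subset_union_left)

lemma nu_Ioi (ν : Measure ℝ≥0∞) [IsProbabilityMeasure ν]
    (hconc : ν {x : ℝ≥0∞ | 1 < x ∧ x ≠ ⊤} = 0)
    (hcdf : ∀ t : ℝ, t ∈ Set.Ioc (0:ℝ) 1 →
      ν (Set.Ioc (ENNReal.ofReal t) 1 ∪ {⊤}) = ENNReal.ofReal (min 1 (1/(2*t))))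
    {t : ℝ} (ht : t ∈ Set.Ioc (0:ℝ) 1) :
    ν (Ioi (ENNReal.ofReal t)) = ENNReal.ofReal (min 1 (1/(2*t))) := by
  have hset : Ioi (ENNReal.ofReal t)
      = (Ioc (ENNReal.ofReal t) 1 ∪ {⊤}) ∪ {x : ℝ≥0∞ | 1 < x ∧ x ≠ ⊤} := by
    ext x
    simp only [mem_Ioi, mem_union, mem_Ioc, mem_singleton_iff, mem_setOf_eq]
    constructor
    · intro hx
      rcases le_or_gt x 1 with h1 | h1
      · exact Or.inl (Or.inl ⟨hx, h1⟩)
      · rcases eq_or_ne x ⊤ with h2 | h2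
        · exact Or.inl (Or.inr h2)
        · exact Or.inr ⟨h1, h2⟩
    · rintro ((⟨h, -⟩ | rfl) | ⟨h1, -⟩)
      · exact h
      · exact ENNReal.ofReal_lt_top
      · exact lt_of_le_of_lt (ENNReal.ofReal_le_one.2 ht.2) h1
  rw [hset, measure_union_null' hconc, hcdf t ht]

lemma nu_Ioi_one (ν : Measure ℝ≥0∞) [IsProbabilityMeasure ν]
    (hconc : ν {x : ℝ≥0∞ | 1 < x ∧ x ≠ ⊤} = 0)
    (hcdf : ∀ t : ℝ, t ∈ Set.Ioc (0:ℝ) 1 →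
      ν (Set.Ioc (ENNReal.ofReal t) 1 ∪ {⊤}) = ENNReal.ofReal (min 1 (1/(2*t))))
    {b : ℝ≥0∞} (hb : b ≤ ENNReal.ofReal (1/2)) : ν (Ioi b) = 1 := by
  have h1 : ν (Ioi (ENNReal.ofReal (1/2 : ℝ))) = 1 := by
    rw [nu_Ioi ν hconc hcdf (by norm_num : (1/2:ℝ) ∈ Set.Ioc (0:ℝ) 1)]
    norm_num
  exact le_antisymm prob_le_one (h1 ▸ measure_mono (Ioi_subset_Ioi hb))

lemma nu_Ioi_ge_one (ν : Measure ℝ≥0∞) [IsProbabilityMeasure ν]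
    (hconc : ν {x : ℝ≥0∞ | 1 < x ∧ x ≠ ⊤} = 0)
    (hcdf : ∀ t : ℝ, t ∈ Set.Ioc (0:ℝ) 1 →
      ν (Set.Ioc (ENNReal.ofReal t) 1 ∪ {⊤}) = ENNReal.ofReal (min 1 (1/(2*t))))
    {a : ℝ≥0∞} (h1 : 1 ≤ a) (ha : a ≠ ⊤) :
    ν (Ioi a) = ENNReal.ofReal (1/2) := by
  have htop : ν {(⊤ : ℝ≥0∞)} = ENNReal.ofReal (1/2) := by
    have h := hcdf 1 (by norm_num)
    simp only [ENNReal.ofReal_one, Ioc_self, empty_union] at h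
    rw [h]
    norm_num
  have hset : Ioi a = {(⊤ : ℝ≥0∞)} ∪ (Ioi a ∩ {x : ℝ≥0∞ | 1 < x ∧ x ≠ ⊤}) := by
    ext x
    simp only [mem_Ioi, mem_union, mem_singleton_iff, mem_inter_iff, mem_setOf_eq]
    constructor
    · intro hx
      rcases eq_or_ne x ⊤ with h2 | h2
      · exact Or.inl h2
      · exact Or.inr ⟨hx, lt_of_le_of_lt h1 hx, h2⟩
    · rintro (rfl | ⟨hx, -⟩)
      · exact lt_top_iff_ne_top.2 ha
      · exact hx
  rw [hset, measure_union_null' (measure_mono_null inter_subset_right hconc), htop]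

/-- The measure ν on I = [0,1] ∪ {∞} defined by ν((t,1] ∪ {∞}) = min(1, 1/(2t))
solves the RDE X ≐ γ[τ](X₁,X₂) with τ uniform on [0,1] and X₁, X₂ i.i.d. ~ ν. -/
theorem stmt0 (ν : Measure ℝ≥0∞) [IsProbabilityMeasure ν]
    (hconc : ν {x : ℝ≥0∞ | 1 < x ∧ x ≠ ⊤} = 0)
    (hcdf : ∀ t : ℝ, t ∈ Set.Ioc (0:ℝ) 1 →
      ν (Set.Ioc (ENNReal.ofReal t) 1 ∪ {⊤}) = ENNReal.ofReal (min 1 (1/(2*t)))) :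
    Measure.map (fun p : ℝ × ℝ≥0∞ × ℝ≥0∞ => gammaMap p.1 p.2.1 p.2.2)
      ((volume.restrict (Set.Icc (0:ℝ) 1)).prod (ν.prod ν)) = ν := by
  refine (Measure.ext_of_Iic ν _ fun a => ?_).symm
  rw [Measure.map_apply measurable_gammaMap measurableSet_Iic]
  rcases eq_or_ne a ⊤ with rfl | ha
  · have hpre : (fun p : ℝ × ℝ≥0∞ × ℝ≥0∞ => gammaMap p.1 p.2.1 p.2.2) ⁻¹' (Iic ⊤) = univ := by
      ext p; simp
    rw [hpre, Iic_top, ← univ_prod_univ, Measure.prod_prod, ← univ_prod_univ,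
      Measure.prod_prod, Measure.restrict_apply_univ, Real.volume_Icc,
      measure_univ]
    norm_num
  · rw [Measure.prod_apply (measurable_gammaMap measurableSet_Iic)]
    have hsl : ∀ t : ℝ,
        (ν.prod ν) (Prod.mk t ⁻¹' ((fun p : ℝ × ℝ≥0∞ × ℝ≥0∞ =>
            gammaMap p.1 p.2.1 p.2.2) ⁻¹' (Iic a)))
        = ν (Ioi (ENNReal.ofReal t)) ^ 2 - ν (Ioi (max (ENNReal.ofReal t) a)) ^ 2 := by
      intro t
      exact slice_measure ν a ha t
    rw [lintegral_congr hsl]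
    rcases le_or_gt a (ENNReal.ofReal (1/2)) with hA | hA
    · -- a ≤ 1/2 : both sides vanish
      have hz : ∀ t : ℝ,
          ν (Ioi (ENNReal.ofReal t)) ^ 2 - ν (Ioi (max (ENNReal.ofReal t) a)) ^ 2 = 0 := by
        intro t
        rcases le_or_gt t (1/2) with h | h
        · rw [nu_Ioi_one ν hconc hcdf (ENNReal.ofReal_le_ofReal h),
            nu_Ioi_one ν hconc hcdf (max_le (ENNReal.ofReal_le_ofReal h) hA), tsub_self]
        · rw [max_eq_left (hA.trans (ENNReal.ofReal_le_ofReal h.le)), tsub_self]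
      have h0 : ν (Iic (ENNReal.ofReal (1/2 : ℝ))) = 0 := by
        rw [← Set.compl_Ioi, measure_compl measurableSet_Ioi (measure_ne_top ν _),
          measure_univ, nu_Ioi_one ν hconc hcdf le_rfl, tsub_self]
      have h1 : ν (Iic a) = 0 :=
        le_antisymm (h0 ▸ measure_mono (Iic_subset_Iic.2 hA)) zero_le
      simp only [hz, lintegral_zero, h1]
    · -- main case
      have ha2 : 1/2 < a.toReal := by
        rwa [ENNReal.ofReal_lt_iff_lt_toReal (by norm_num) ha] at hA
      set α : ℝ := min a.toReal 1 with hαdef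
      have hα1 : α ≤ 1 := min_le_right _ _
      have hα0 : 1/2 < α := lt_min ha2 (by norm_num)
      have hαpos : 0 < α := by linarith
      have hk1 : 1/(2*α) ≤ 1 := by rw [div_le_one (by linarith)]; linarith
      have hk0 : (0:ℝ) ≤ 1/(2*α) := by positivity
      have hks : (0:ℝ) ≤ 1 - (1/(2*α))^2 := by nlinarith [hk1, hk0]
      have hRa : ν (Ioi a) = ENNReal.ofReal (1/(2*α)) := by
        rcases le_or_gt a 1 with h1 | h1
        · have htr : a.toReal ≤ 1 := by
            calc a.toReal ≤ (1:ℝ≥0∞).toReal := ENNReal.toReal_mono (by norm_num) h1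
            _ = 1 := ENNReal.toReal_one
          have haa : a = ENNReal.ofReal α := by
            rw [hαdef, min_eq_left htr, ENNReal.ofReal_toReal ha]
          rw [haa, nu_Ioi ν hconc hcdf ⟨by linarith, by linarith⟩]
          congr 1
          exact min_eq_right hk1
        · have hαeq : α = 1 := min_eq_right (by
            calc (1:ℝ) = (1:ℝ≥0∞).toReal := ENNReal.toReal_one.symm
            _ ≤ a.toReal := ENNReal.toReal_mono ha h1.le)
          rw [nu_Ioi_ge_one ν hconc hcdf h1.le ha, hαeq]
          norm_num
      have hαa : ENNReal.ofReal α ≤ a := by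
        rcases le_or_gt a 1 with h1 | h1
        · have htr : a.toReal ≤ 1 := by
            calc a.toReal ≤ (1:ℝ≥0∞).toReal := ENNReal.toReal_mono (by norm_num) h1
            _ = 1 := ENNReal.toReal_one
          rw [hαdef, min_eq_left htr, ENNReal.ofReal_toReal ha]
        · refine le_trans ?_ h1.le
          rw [← ENNReal.ofReal_one]
          exact ENNReal.ofReal_le_ofReal hα1
      have hRmax : ∀ t : ℝ, t ≤ α →
          ν (Ioi (max (ENNReal.ofReal t) a)) = ENNReal.ofReal (1/(2*α)) := by
        intro t htα
        rw [max_eq_right ((ENNReal.ofReal_le_ofReal htα).trans hαa), hRa]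
      have hsplit : volume.restrict (Icc (0:ℝ) 1) = volume.restrict (Ioc (0:ℝ) 1) :=
        (Measure.restrict_congr_set Ioc_ae_eq_Icc).symm
      rw [hsplit,
        show Ioc (0:ℝ) 1 = Ioc (0:ℝ) α ∪ Ioc α 1 from
          (Ioc_union_Ioc_eq_Ioc hαpos.le hα1).symm,
        lintegral_union measurableSet_Ioc (Ioc_disjoint_Ioc_of_le le_rfl),
        show Ioc (0:ℝ) α = Ioc (0:ℝ) (1/2) ∪ Ioc (1/2:ℝ) α from
          (Ioc_union_Ioc_eq_Ioc (by norm_num) hα0.le).symm,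
        lintegral_union measurableSet_Ioc (Ioc_disjoint_Ioc_of_le le_rfl)]
      have hpiece1 : ∫⁻ t in Ioc (0:ℝ) (1/2),
          (ν (Ioi (ENNReal.ofReal t)) ^ 2 - ν (Ioi (max (ENNReal.ofReal t) a)) ^ 2)
          = ENNReal.ofReal ((1 - (1/(2*α))^2) * (1/2)) := by
        rw [setLIntegral_congr_fun measurableSet_Ioc (
          (fun t ht => show _ = ENNReal.ofReal (1 - (1/(2*α))^2) from by
            rw [nu_Ioi_one ν hconc hcdf (ENNReal.ofReal_le_ofReal ht.2),
              hRmax t (by linarith [ht.2]), one_pow,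
              ← ENNReal.ofReal_pow (by positivity), ← ENNReal.ofReal_one,
              ← ENNReal.ofReal_sub _ (by positivity)]))]
        rw [setLIntegral_const, Real.volume_Ioc, ← ENNReal.ofReal_mul hks]
        norm_num
      have hpiece2 : ∫⁻ t in Ioc (1/2:ℝ) α,
          (ν (Ioi (ENNReal.ofReal t)) ^ 2 - ν (Ioi (max (ENNReal.ofReal t) a)) ^ 2)
          = ENNReal.ofReal ((2*α-1)^2/(8*α^2)) := by
        rw [setLIntegral_congr_fun measurableSet_Ioc (
          (fun t ht => show _ = ENNReal.ofReal ((1/(2*t))^2 - (1/(2*α))^2) from by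
            have ht0 : 0 < t := by linarith [ht.1]
            rw [nu_Ioi ν hconc hcdf ⟨ht0, le_trans ht.2 hα1⟩,
              min_eq_right (by rw [div_le_one (by linarith [ht.1])]; linarith [ht.1]),
              hRmax t ht.2, ← ENNReal.ofReal_pow (by positivity),
              ← ENNReal.ofReal_pow (by positivity),
              ← ENNReal.ofReal_sub _ (by positivity)]))]
        have hcont : ContinuousOn (fun t : ℝ => (1/(2*t))^2 - (1/(2*α))^2)
            (Icc (1/2:ℝ) α) := by
          apply ContinuousOn.sub _ continuousOn_const
          apply ContinuousOn.pow
          exact continuousOn_const.div (continuousOn_const.mul continuousOn_id)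
            (fun x hx => by have := hx.1; positivity)
        have hint : Integrable (fun t : ℝ => (1/(2*t))^2 - (1/(2*α))^2)
            (volume.restrict (Ioc (1/2:ℝ) α)) :=
          (hcont.integrableOn_Icc).mono_set Ioc_subset_Icc_self
        have hnn : 0 ≤ᵐ[volume.restrict (Ioc (1/2:ℝ) α)]
            (fun t : ℝ => (1/(2*t))^2 - (1/(2*α))^2) := by
          refine (ae_restrict_iff' measurableSet_Ioc).2 (ae_of_all _ fun t ht => ?_)
          simp only [Pi.zero_apply]
          have ht0 : (0:ℝ) < t := by linarith [ht.1]
          have h2 : 1/(2*α) ≤ 1/(2*t) := by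
            apply one_div_le_one_div_of_le (by linarith) (by linarith [ht.2])
          have h3 : (0:ℝ) ≤ 1/(2*t) := by positivity
          nlinarith [sq_nonneg (1/(2*t) - 1/(2*α))]
        rw [← ofReal_integral_eq_lintegral_ofReal hint hnn, real_int α hα0 hα1]
      have hpiece3 : ∫⁻ t in Ioc α 1,
          (ν (Ioi (ENNReal.ofReal t)) ^ 2 - ν (Ioi (max (ENNReal.ofReal t) a)) ^ 2)
          = 0 := by
        rw [setLIntegral_congr_fun measurableSet_Ioc (
          (fun t ht => show _ = (0:ℝ≥0∞) from by
            have haα : a ≤ ENNReal.ofReal t := by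
              rcases le_or_gt a 1 with h1 | h1
              · have htr : a.toReal ≤ 1 := by
                  calc a.toReal ≤ (1:ℝ≥0∞).toReal := ENNReal.toReal_mono (by norm_num) h1
                  _ = 1 := ENNReal.toReal_one
                have haa : a = ENNReal.ofReal α := by
                  rw [hαdef, min_eq_left htr, ENNReal.ofReal_toReal ha]
                rw [haa]
                exact ENNReal.ofReal_le_ofReal (le_of_lt ht.1)
              · exfalso
                have : α = 1 := min_eq_right (by
                  calc (1:ℝ) = (1:ℝ≥0∞).toReal := ENNReal.toReal_one.symm
                  _ ≤ a.toReal := ENNReal.toReal_mono ha h1.le)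
                rw [this] at ht
                linarith [ht.1, ht.2]
            rw [max_eq_left haα, tsub_self]))]
        simp
      rw [hpiece1, hpiece2, hpiece3, add_zero,
        ← ENNReal.ofReal_add (mul_nonneg hks (by norm_num)) (by positivity),
        ← Set.compl_Ioi, measure_compl measurableSet_Ioi (measure_ne_top ν _),
        measure_univ, hRa, ← ENNReal.ofReal_one,
        ← ENNReal.ofReal_sub _ (by positivity),
        ENNReal.ofReal_eq_ofReal_iff (by linarith [hk1])
          (add_nonneg (mul_nonneg hks (by norm_num)) (by positivity))]
      field_simp
      ring
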